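/- Let (X, d) be a proper metric space with basepoint x₀ ∈ X, and let f : X → X be a semicontraction, i.e., d(f x, f y) ≤ d(x, y) for all x, y ∈ X. Let l := lim_{n→∞} (1/n) d(x₀, fⁿ x₀) (the limit exists by subadditivity). Then there exists a function h : X → ℝ in the closure of Φ(X) (in the topology of pointwise convergence on C(X, ℝ)) such that: (a) h(f^k x₀) ≤ −l·k for every integer k ≥ 0, and (b) for every x ∈ X, lim_{N→∞} −(1/N) h(f^N x) = l. -/

import Mathlib

open Filter Topology

/-- Record times: a sequence tending to infinity achieves a running maximum
arbitrarily late. -/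
lemma exists_record_time (b : ℕ → ℝ) (hb : Tendsto b atTop atTop) (N : ℕ) :
    ∃ n ≥ N, ∀ m ≤ n, b m ≤ b n := by
  obtain ⟨C, hC⟩ : ∃ C : ℝ, ∀ m < N, b m < C := by
    obtain ⟨j, hj, hjmax⟩ := Finset.exists_max_image (Finset.range (N + 1)) b ⟨0, by simp⟩
    exact ⟨b j + 1, fun m hm => lt_of_le_of_lt
      (hjmax m (Finset.mem_range.2 (by omega))) (by linarith)⟩
  obtain ⟨T, hTN, hTC⟩ : ∃ T ≥ N, C ≤ b T := by
    have := (hb.eventually_ge_atTop C).and (eventually_ge_atTop N)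
    obtain ⟨T, hT⟩ := this.exists
    exact ⟨T, hT.2, hT.1⟩
  obtain ⟨n, hn, hnmax⟩ := Finset.exists_max_image (Finset.range (T + 1)) b
    ⟨0, by simp⟩
  refine ⟨n, ?_, fun m hm => hnmax m (Finset.mem_range.2 (by
    have := Finset.mem_range.1 hn; omega))⟩
  by_contra hlt
  push_neg at hlt
  have h1 : b n < C := hC n hlt
  have h2 : b T ≤ b n := hnmax T (Finset.mem_range.2 (by omega))
  linarith

theorem semicontraction_drift_horofunction
    {X : Type*} [MetricSpace X] [ProperSpace X] (x₀ : X)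
    (f : X → X) (hf : ∀ x y : X, dist (f x) (f y) ≤ dist x y)
    (l : ℝ)
    (hl : Tendsto (fun n : ℕ => dist x₀ (f^[n] x₀) / (n : ℝ)) atTop (𝓝 l)) :
    ∃ h : X → ℝ,
      h ∈ closure {g : X → ℝ | ∃ x : X, g = fun y => dist x y - dist x x₀} ∧
      (∀ k : ℕ, h (f^[k] x₀) ≤ -l * k) ∧
      (∀ x : X,
        Tendsto (fun N : ℕ => -h (f^[N] x) / (N : ℝ)) atTop (𝓝 l)) := by
  classical
  set S : Set (X → ℝ) := {g : X → ℝ | ∃ x : X, g = fun y => dist x y - dist x x₀}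
    with hS
  set a : ℕ → ℝ := fun n => dist x₀ (f^[n] x₀) with ha
  -- iterated semicontraction
  have hiter : ∀ (k : ℕ) (x y : X), dist (f^[k] x) (f^[k] y) ≤ dist x y := by
    intro k
    induction k with
    | zero => intro x y; simp
    | succ k ih =>
      intro x y
      rw [Function.iterate_succ_apply, Function.iterate_succ_apply]
      exact (ih (f x) (f y)).trans (hf x y)
  have hkey : ∀ n k : ℕ, k ≤ n → dist (f^[n] x₀) (f^[k] x₀) ≤ a (n - k) := by
    intro n k hk
    have : f^[n] x₀ = f^[k] (f^[n - k] x₀) := by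
      rw [← Function.iterate_add_apply]
      congr 1
      omega
    rw [this]
    calc dist (f^[k] (f^[n - k] x₀)) (f^[k] x₀) ≤ dist (f^[n - k] x₀) x₀ :=
          hiter k _ _
      _ = a (n - k) := dist_comm _ _
  -- closure S is compact
  have hSsub : S ⊆ {g : X → ℝ | ∀ y, g y ∈ Set.Icc (-dist x₀ y) (dist x₀ y)} := by
    rintro g ⟨x, rfl⟩ y
    simp only [Set.mem_Icc]
    rw [dist_comm x₀ y]
    exact ⟨by linarith [dist_triangle x y x₀],
      by linarith [dist_triangle x x₀ y, dist_comm x₀ y]⟩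
  have hKcomp : IsCompact {g : X → ℝ | ∀ y, g y ∈ Set.Icc (-dist x₀ y) (dist x₀ y)} :=
    isCompact_pi_infinite fun y => isCompact_Icc
  have hKclosed : IsClosed {g : X → ℝ | ∀ y, g y ∈ Set.Icc (-dist x₀ y) (dist x₀ y)} := by
    have : {g : X → ℝ | ∀ y, g y ∈ Set.Icc (-dist x₀ y) (dist x₀ y)}
        = ⋂ y, (fun g : X → ℝ => g y) ⁻¹' Set.Icc (-dist x₀ y) (dist x₀ y) := by
      ext g; simp [Set.mem_iInter]
    rw [this]
    exact isClosed_iInter fun y => isClosed_Icc.preimage (continuous_apply y)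
  have hclosSsub : closure S ⊆
      {g : X → ℝ | ∀ y, g y ∈ Set.Icc (-dist x₀ y) (dist x₀ y)} :=
    closure_minimal hSsub hKclosed
  have hcompClos : IsCompact (closure S) :=
    hKcomp.of_isClosed_subset isClosed_closure hclosSsub
  -- the nested family of closed sets
  set A : ℕ → Set (X → ℝ) := fun m =>
    closure S ∩ {g : X → ℝ | ∀ k ≤ m, g (f^[k] x₀) ≤ -(l - 1 / (m + 1)) * k} with hA
  have hAclosed : ∀ m, IsClosed (A m) := by
    intro m
    apply isClosed_closure.inter
    have : {g : X → ℝ | ∀ k ≤ m, g (f^[k] x₀) ≤ -(l - 1 / (m + 1)) * k}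
        = ⋂ k, ⋂ _ : k ≤ m, {g : X → ℝ | g (f^[k] x₀) ≤ -(l - 1 / (m + 1)) * k} := by
      ext g; simp [Set.mem_iInter]
    rw [this]
    exact isClosed_iInter fun k => isClosed_iInter fun _ =>
      isClosed_le (continuous_apply _) continuous_const
  have hAnested : ∀ m, A (m + 1) ⊆ A m := by
    intro m g hg
    refine ⟨hg.1, fun k hk => (hg.2 k (by omega)).trans ?_⟩
    have h1 : (1 : ℝ) / (↑(m + 1) + 1) ≤ 1 / (↑m + 1) := by
      apply one_div_le_one_div_of_le
      · positivity
      · push_cast; linarith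
    have : -(l - 1 / (↑(m + 1) + 1)) ≤ -(l - 1 / (↑m + 1)) := by linarith
    exact mul_le_mul_of_nonneg_right this (Nat.cast_nonneg k)
  have hAnonempty : ∀ m, (A m).Nonempty := by
    intro m
    set ε : ℝ := 1 / (m + 1) with hε
    have hεpos : 0 < ε := by positivity
    -- b tends to infinity
    have hbtop : Tendsto (fun n : ℕ => a n - (l - ε) * n) atTop atTop := by
      have h1 : Tendsto (fun n : ℕ => (n : ℝ) * (a n / n - (l - ε))) atTop atTop := by
        refine Tendsto.atTop_mul_pos hεpos tendsto_natCast_atTop_atTop ?_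
        have := hl.sub (tendsto_const_nhds (x := l - ε))
        simpa using this
      refine h1.congr' ?_
      filter_upwards [eventually_ge_atTop 1] with n hn
      have hn0 : (n : ℝ) ≠ 0 := by positivity
      field_simp
    obtain ⟨n, hnm, hrec⟩ := exists_record_time _ hbtop m
    refine ⟨(fun y => dist (f^[n] x₀) y - dist (f^[n] x₀) x₀), subset_closure ⟨_, rfl⟩,
      fun k hk => ?_⟩
    have hkn : k ≤ n := le_trans hk hnm
    have h1 : dist (f^[n] x₀) (f^[k] x₀) ≤ a (n - k) := hkey n k hkn
    have h2 : dist (f^[n] x₀) x₀ = a n := dist_comm _ _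
    have h3 : a (n - k) - (l - ε) * ((n : ℝ) - k) ≤ a n - (l - ε) * n := by
      have := hrec (n - k) (by omega)
      have hcast : ((n - k : ℕ) : ℝ) = (n : ℝ) - k := by
        push_cast [Nat.cast_sub hkn]; ring
      rw [hcast] at this
      linarith
    have : a (n - k) - a n ≤ -(l - ε) * k := by linarith
    rw [h2]
    linarith
  -- extract h
  obtain ⟨h, hh⟩ := IsCompact.nonempty_iInter_of_sequence_nonempty_isCompact_isClosed
    A hAnested hAnonempty
    ((hcompClos.of_isClosed_subset (hAclosed 0) (Set.inter_subset_left)))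
    hAclosed
  have hhm : ∀ m, h ∈ A m := fun m => Set.mem_iInter.1 hh m
  have hclos : h ∈ closure S := (hhm 0).1
  -- property (a)
  have hprop_a : ∀ k : ℕ, h (f^[k] x₀) ≤ -l * k := by
    intro k
    have hlim : Tendsto (fun m : ℕ => -(l - 1 / ((m : ℝ) + 1)) * k) atTop (𝓝 (-l * k)) := by
      have h0 : Tendsto (fun m : ℕ => 1 / ((m : ℝ) + 1)) atTop (𝓝 0) :=
        tendsto_one_div_add_atTop_nhds_zero_nat
      have H := (((tendsto_const_nhds (x := l)).sub h0).mul_const (k : ℝ)).neg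
      rw [sub_zero] at H
      simpa only [neg_mul] using H
    refine ge_of_tendsto hlim ?_
    filter_upwards [eventually_ge_atTop k] with m hm
    exact (hhm m).2 k hm
  -- h is 1-Lipschitz-type and h x₀ = 0
  have hlip : ∀ y z : X, h y ≤ h z + dist y z := by
    have hcl : closure S ⊆ {g : X → ℝ | ∀ y z : X, g y ≤ g z + dist y z} := by
      apply closure_minimal
      · rintro g ⟨x, rfl⟩ y z
        have := dist_triangle x z y
        rw [dist_comm z y] at this
        simp only
        linarith
      · have : {g : X → ℝ | ∀ y z : X, g y ≤ g z + dist y z}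
            = ⋂ y, ⋂ z, {g : X → ℝ | g y ≤ g z + dist y z} := by
          ext g; simp [Set.mem_iInter]
        rw [this]
        exact isClosed_iInter fun y => isClosed_iInter fun z =>
          isClosed_le (continuous_apply _) ((continuous_apply _).add continuous_const)
    exact hcl hclos
  have hzero : h x₀ = 0 := by
    have hcl : closure S ⊆ {g : X → ℝ | g x₀ = 0} := by
      apply closure_minimal
      · rintro g ⟨x, rfl⟩; simp
      · exact isClosed_eq (continuous_apply _) continuous_const
    exact hcl hclos
  have hlower : ∀ y : X, -dist x₀ y ≤ h y := by
    intro y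
    have h1 := hlip x₀ y
    have h2 : dist x₀ y = dist y x₀ := dist_comm _ _
    rw [hzero] at h1
    linarith
  -- the base case limit
  have hbase : Tendsto (fun N : ℕ => -h (f^[N] x₀) / (N : ℝ)) atTop (𝓝 l) := by
    refine tendsto_of_tendsto_of_tendsto_of_le_of_le' tendsto_const_nhds hl ?_ ?_
    · filter_upwards [eventually_ge_atTop 1] with N hN
      have hNpos : (0 : ℝ) < N := by exact_mod_cast hN
      have := hprop_a N
      rw [le_div_iff₀ hNpos]
      linarith
    · filter_upwards [eventually_ge_atTop 1] with N hN
      have hNpos : (0 : ℝ) < N := by exact_mod_cast hN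
      have := hlower (f^[N] x₀)
      rw [div_le_div_iff_of_pos_right hNpos]
      linarith
  refine ⟨h, hclos, hprop_a, fun x => ?_⟩
  -- general x
  have hdistxN : ∀ N : ℕ, dist (f^[N] x) (f^[N] x₀) ≤ dist x x₀ := fun N => hiter N x x₀
  have hdiv0 : Tendsto (fun N : ℕ => dist x x₀ / (N : ℝ)) atTop (𝓝 0) :=
    Tendsto.div_atTop tendsto_const_nhds tendsto_natCast_atTop_atTop
  have hlo : Tendsto (fun N : ℕ => -h (f^[N] x₀) / (N : ℝ) - dist x x₀ / N) atTop (𝓝 l) := by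
    have := hbase.sub hdiv0; simpa using this
  have hhi : Tendsto (fun N : ℕ => -h (f^[N] x₀) / (N : ℝ) + dist x x₀ / N) atTop (𝓝 l) := by
    have := hbase.add hdiv0; simpa using this
  refine tendsto_of_tendsto_of_tendsto_of_le_of_le' hlo hhi ?_ ?_
  · filter_upwards [eventually_ge_atTop 1] with N hN
    have hNpos : (0 : ℝ) < N := by exact_mod_cast hN
    have h1 : h (f^[N] x) ≤ h (f^[N] x₀) + dist x x₀ :=
      (hlip (f^[N] x) (f^[N] x₀)).trans (by linarith [hdistxN N])
    rw [div_sub_div_same, div_le_div_iff_of_pos_right hNpos] at *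
    linarith
  · filter_upwards [eventually_ge_atTop 1] with N hN
    have hNpos : (0 : ℝ) < N := by exact_mod_cast hN
    have h1 : h (f^[N] x₀) ≤ h (f^[N] x) + dist x x₀ := by
      have := hlip (f^[N] x₀) (f^[N] x)
      rw [dist_comm] at this
      linarith [hdistxN N]
    rw [← add_div, div_le_div_iff_of_pos_right hNpos]
    linarith
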